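/- For every even n and every z ∈ {1, 2, …, n−2}, there exists a 2-regular (n, n, z+1, n(n−z−1)/2) placement delivery array. (It is obtained from the diagonal 2-PDA of size n by deleting the integers corresponding to z disjoint 1-factors of K_n.) -/

import Mathlib

open Finset

/-- Number of stars (`none`) in column `k` of the array `P`. -/
def colStars {f K : ℕ} (P : Fin f → Fin K → Option ℕ) (k : Fin K) : ℕ :=
  (Finset.univ.filter fun j => P j k = none).card

/-- `P` is a `(K, f, Z, S)` placement delivery array: an `f × K` array over `{∗} ∪ S`
(`none` encodes `∗`) with exactly `Z` stars in each column, every integer of `S`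
occurring at least once (and all integer entries lying in `S`), satisfying the
Blackburn property. -/
def IsPDA {f K : ℕ} (P : Fin f → Fin K → Option ℕ) (Z : ℕ) (S : Finset ℕ) : Prop :=
  (∀ k, colStars P k = Z) ∧
  (∀ s ∈ S, ∃ j k, P j k = some s) ∧
  (∀ j k s, P j k = some s → s ∈ S) ∧
  (∀ j₁ k₁ j₂ k₂ s, (j₁, k₁) ≠ (j₂, k₂) →
    P j₁ k₁ = some s → P j₂ k₂ = some s → P j₁ k₂ = none ∧ P j₂ k₁ = none)

/-- Every integer of `S` appears exactly `g` times in the array `P`. -/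
def IsRegularPDA {f K : ℕ} (P : Fin f → Fin K → Option ℕ) (S : Finset ℕ) (g : ℕ) : Prop :=
  ∀ s ∈ S, ((Finset.univ : Finset (Fin f × Fin K)).filter
    (fun jk => P jk.1 jk.2 = some s)).card = g

/-- `P₀` and `P₁` are Blackburn-compatible with respect to `Pstar`. -/
def BBCompat {n m : ℕ} (P₀ P₁ Pstar : Fin n → Fin m → Option ℕ) : Prop :=
  ∀ i₀ j₀ i₁ j₁ s, P₀ i₀ j₀ = some s → P₁ i₁ j₁ = some s →
    Pstar i₀ j₁ = none ∧ Pstar i₁ j₀ = none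

/-- `Ig n t` is the `n × n` array with the integer `t` on the main diagonal and `∗`
elsewhere. -/
def Ig (n t : ℕ) : Fin n → Fin n → Option ℕ := fun i j => if i = j then some t else none

/-- Block-row index of a global index for an array built from `a × a` grids of `b`-sized
blocks. -/
def blkIdx {a b : ℕ} (j : Fin (a * b)) : Fin a :=
  ⟨(j : ℕ) / b, Nat.div_lt_of_lt_mul (Nat.mul_comm a b ▸ j.isLt)⟩

/-- Within-block index of a global index. -/
def inIdx {a b : ℕ} (j : Fin (a * b)) : Fin b :=
  ⟨(j : ℕ) % b, Nat.mod_lt _ (by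
    rcases Nat.eq_zero_or_pos b with h | h
    · exact absurd j.isLt (by simp [h])
    · exact h)⟩

namespace Stmt4

/-- Round (1-factor index) of the edge `{i,j}` of `K_n` in the standard round-robin
1-factorization. -/
def rnd (n i j : ℕ) : ℕ :=
  if i = n - 1 then j else if j = n - 1 then i else ((i + j) * (n / 2)) % (n - 1)

lemma rnd_symm (n i j : ℕ) : rnd n i j = rnd n j i := by
  unfold rnd
  rcases eq_or_ne i (n-1) with h|h <;> rcases eq_or_ne j (n-1) with h'|h' <;>
    simp [h, h', Nat.add_comm]

section
variable {n : ℕ} (h2 : 2 * (n / 2) = n) (h4 : 4 ≤ n)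
include h2 h4

lemma key_mul (x : ℕ) : x * n ≡ x [MOD n - 1] := by
  have h1 : (1:ℕ) ≡ n [MOD n - 1] := by
    rw [Nat.modEq_iff_dvd' (by omega)]
  calc x * n ≡ x * 1 [MOD n - 1] := Nat.ModEq.mul_left x h1.symm
    _ = x := by ring

lemma cancel_h {a b : ℕ} (hab : a * (n/2) ≡ b * (n/2) [MOD n-1]) : a ≡ b [MOD n-1] := by
  have h := hab.mul_right 2
  have e : ∀ x : ℕ, x * (n/2) * 2 = x * n := by intro x; rw [mul_assoc]; congr 1; omega
  rw [e, e] at h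
  calc a ≡ a * n [MOD n-1] := (key_mul h2 h4 a).symm
    _ ≡ b * n [MOD n-1] := h
    _ ≡ b [MOD n-1] := key_mul h2 h4 b

lemma cancel_two {a b : ℕ} (hab : 2 * a ≡ 2 * b [MOD n-1]) : a ≡ b [MOD n-1] := by
  have h := hab.mul_right (n/2)
  have e : ∀ x : ℕ, 2 * x * (n/2) = x * n * 1 := by intro x; rw [mul_one, mul_comm 2 x, mul_assoc]; congr 1
  rw [e, e, mul_one, mul_one] at h
  calc a ≡ a * n [MOD n-1] := (key_mul h2 h4 a).symm
    _ ≡ b * n [MOD n-1] := h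
    _ ≡ b [MOD n-1] := key_mul h2 h4 b

lemma rnd_lt {i j : ℕ} (hi : i < n) (hj : j < n) (hij : i ≠ j) : rnd n i j < n - 1 := by
  unfold rnd
  split_ifs with hA hB
  · omega
  · omega
  · exact Nat.mod_lt _ (by omega)

lemma rnd_inj {j j' k : ℕ} (hj : j < n) (hj' : j' < n) (hk : k < n)
    (hjk : j ≠ k) (hj'k : j' ≠ k) (he : rnd n j k = rnd n j' k) : j = j' := by
  rcases eq_or_ne k (n-1) with hkm | hkm
  · -- k = n-1 : rnd j k = j
    unfold rnd at he
    rw [if_neg (by omega), if_pos hkm, if_neg (by omega), if_pos hkm] at he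
    exact he
  · -- k < n-1
    have hklt : k < n - 1 := by omega
    -- helper: if a < n-1, a ≠ k and rnd a k = ((a+k)*(n/2)) % (n-1)
    have hform : ∀ a : ℕ, a ≠ n - 1 → rnd n a k = ((a + k) * (n/2)) % (n-1) := by
      intro a ha; unfold rnd; rw [if_neg ha, if_neg hkm]
    have hdiag : ∀ a : ℕ, a < n - 1 → a ≠ k → rnd n a k ≠ k := by
      intro a ha hak hcon
      rw [hform a (by omega)] at hcon
      have hme : (a + k) * (n/2) ≡ (k + k) * (n/2) [MOD n-1] := by
        have : (k + k) * (n/2) ≡ k [MOD n-1] := by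
          have e : (k + k) * (n/2) = k * (2 * (n/2)) := by ring
          rw [e, h2]; exact key_mul h2 h4 k
        have h1 : (a + k) * (n/2) ≡ k [MOD n-1] := by
          unfold Nat.ModEq; rw [hcon, Nat.mod_eq_of_lt hklt]
        exact h1.trans this.symm
      have := (cancel_h h2 h4 hme).add_right_cancel' k
      have : a % (n-1) = k % (n-1) := this
      rw [Nat.mod_eq_of_lt ha, Nat.mod_eq_of_lt hklt] at this
      exact hak this
    rcases eq_or_ne j (n-1) with hjm | hjm
    · rcases eq_or_ne j' (n-1) with hj'm | hj'm
      · omega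
      · -- rnd j k = k, rnd j' k ≠ k
        have h1 : rnd n j k = k := by unfold rnd; rw [if_pos hjm]
        exact absurd (he.symm.trans h1) (hdiag j' (by omega) hj'k)
    · rcases eq_or_ne j' (n-1) with hj'm | hj'm
      · have h1 : rnd n j' k = k := by unfold rnd; rw [if_pos hj'm]
        exact absurd (he.trans h1) (hdiag j (by omega) hjk)
      · rw [hform j hjm, hform j' hj'm] at he
        have hme : (j + k) * (n/2) ≡ (j' + k) * (n/2) [MOD n-1] := he
        have := (cancel_h h2 h4 hme).add_right_cancel' k
        have hjj : j % (n-1) = j' % (n-1) := this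
        rw [Nat.mod_eq_of_lt (by omega), Nat.mod_eq_of_lt (by omega)] at hjj
        exact hjj

lemma exists_partner {k r : ℕ} (hk : k < n) (hr : r < n - 1) :
    ∃ j, j < n ∧ j ≠ k ∧ rnd n j k = r := by
  rcases eq_or_ne k (n-1) with hkm | hkm
  · refine ⟨r, by omega, by omega, ?_⟩
    unfold rnd; rw [if_neg (by omega), if_pos hkm]
  · rcases eq_or_ne r k with hrk | hrk
    · refine ⟨n-1, by omega, by omega, ?_⟩
      unfold rnd; rw [if_pos rfl]; omega
    · refine ⟨(2*r + (n-1-k)) % (n-1), ?_, ?_, ?_⟩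
      · have := Nat.mod_lt (2*r + (n-1-k)) (show 0 < n-1 by omega); omega
      · -- j ≠ k
        intro hcon
        have hsum : ((2*r + (n-1-k)) % (n-1) + k) % (n-1) = (2*r) % (n-1) := by
          rw [Nat.mod_add_mod]
          have : 2*r + (n-1-k) + k = 2*r + (n-1) := by omega
          rw [this, Nat.add_mod_right]
        rw [hcon] at hsum
        have : 2 * k ≡ 2 * r [MOD n-1] := by
          unfold Nat.ModEq; rw [← hsum]; congr 1; omega
        have := cancel_two h2 h4 this
        have : k % (n-1) = r % (n-1) := this
        rw [Nat.mod_eq_of_lt (by omega), Nat.mod_eq_of_lt hr] at this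
        exact hrk this.symm
      · -- rnd value
        have hjlt : (2*r + (n-1-k)) % (n-1) < n - 1 := Nat.mod_lt _ (by omega)
        unfold rnd
        rw [if_neg (by omega), if_neg hkm]
        have hsum : ((2*r + (n-1-k)) % (n-1) + k) % (n-1) = (2*r) % (n-1) := by
          rw [Nat.mod_add_mod]
          have : 2*r + (n-1-k) + k = 2*r + (n-1) := by omega
          rw [this, Nat.add_mod_right]
        have hme : ((2*r + (n-1-k)) % (n-1) + k) * (n/2) ≡ (2*r) * (n/2) [MOD n-1] := by
          exact Nat.ModEq.mul_right _ hsum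
        have h2r : (2*r) * (n/2) ≡ r [MOD n-1] := by
          have e : (2*r) * (n/2) = r * (2 * (n/2)) := by ring
          rw [e, h2]; exact key_mul h2 h4 r
        have := hme.trans h2r
        have hfin : (((2*r + (n-1-k)) % (n-1) + k) * (n/2)) % (n-1) = r % (n-1) := this
        rw [Nat.mod_eq_of_lt hr] at hfin
        exact hfin

lemma fiber_card {z : ℕ} (k : Fin n) {r : ℕ} (hr : r < n-1) :
    (univ.filter fun j : Fin n => j ≠ k ∧ rnd n (j:ℕ) (k:ℕ) = r).card = 1 := by
  obtain ⟨j, hj, hjk, hrnd⟩ := exists_partner h2 h4 k.isLt hr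
  rw [Finset.card_eq_one]
  refine ⟨⟨j, hj⟩, ?_⟩
  ext x
  simp only [Finset.mem_filter, Finset.mem_univ, true_and, Finset.mem_singleton]
  constructor
  · rintro ⟨hxk, hrx⟩
    have : (x:ℕ) = j := rnd_inj h2 h4 x.isLt hj k.isLt
      (fun h => hxk (Fin.ext h)) hjk (hrx.trans hrnd.symm)
    exact Fin.ext this
  · rintro rfl
    exact ⟨fun h => hjk (congrArg Fin.val h), hrnd⟩

lemma col_count {z : ℕ} (hz : z ≤ n - 1) (k : Fin n) :
    (univ.filter fun j : Fin n => j ≠ k ∧ z ≤ rnd n (j:ℕ) (k:ℕ)).card = (n-1) - z := by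
  rw [Finset.card_eq_sum_card_fiberwise
    (f := fun j : Fin n => rnd n (j:ℕ) (k:ℕ)) (t := Finset.Ico z (n-1))
    (by
      intro x hx
      simp only [Finset.mem_coe, Finset.mem_filter, Finset.mem_univ, true_and] at hx
      exact Finset.mem_Ico.mpr ⟨hx.2, rnd_lt h2 h4 x.isLt k.isLt (fun h => hx.1 (Fin.ext h))⟩)]
  have heach : ∀ r ∈ Finset.Ico z (n-1),
      ((univ.filter fun j : Fin n => j ≠ k ∧ z ≤ rnd n (j:ℕ) (k:ℕ)).filter
        (fun j : Fin n => rnd n (j:ℕ) (k:ℕ) = r)).card = 1 := by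
    intro r hr
    rw [Finset.mem_Ico] at hr
    rw [Finset.filter_filter]
    have : (univ.filter fun j : Fin n => (j ≠ k ∧ z ≤ rnd n (j:ℕ) (k:ℕ)) ∧ rnd n (j:ℕ) (k:ℕ) = r)
        = univ.filter fun j : Fin n => j ≠ k ∧ rnd n (j:ℕ) (k:ℕ) = r := by
      apply Finset.filter_congr
      intro x _
      constructor
      · rintro ⟨⟨h1, _⟩, h3⟩; exact ⟨h1, h3⟩
      · rintro ⟨h1, h3⟩; exact ⟨⟨h1, h3 ▸ hr.1⟩, h3⟩
    rw [this]
    exact fiber_card h2 h4 (z := z) k hr.2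
  rw [Finset.sum_congr rfl heach]
  simp [Nat.card_Ico]

end

lemma pair_rec {α : Type*} [LinearOrder α] {a b c d : α}
    (h1 : min a b = min c d) (h2 : max a b = max c d) :
    (a = c ∧ b = d) ∨ (a = d ∧ b = c) := by
  rcases le_total a b with h | h <;> rcases le_total c d with h' | h'
  · rw [min_eq_left h, min_eq_left h'] at h1
    rw [max_eq_right h, max_eq_right h'] at h2
    exact Or.inl ⟨h1, h2⟩
  · rw [min_eq_left h, min_eq_right h'] at h1
    rw [max_eq_right h, max_eq_left h'] at h2
    exact Or.inr ⟨h1, h2⟩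
  · rw [min_eq_right h, min_eq_left h'] at h1
    rw [max_eq_left h, max_eq_right h'] at h2
    exact Or.inr ⟨h2, h1⟩
  · rw [min_eq_right h, min_eq_right h'] at h1
    rw [max_eq_left h, max_eq_left h'] at h2
    exact Or.inl ⟨h2, h1⟩

end Stmt4

/-- For every even `n` and every `z ∈ {1, …, n−2}` there exists a
2-regular `(n, n, z+1, n(n−z−1)/2)` placement delivery array. -/
theorem stmt_4 (n z : ℕ) (hn : Even n) (hz1 : 1 ≤ z) (hz2 : z ≤ n - 2) :
    ∃ P : Fin n → Fin n → Option ℕ,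
      IsPDA P (z + 1) (Finset.range (n * (n - z - 1) / 2)) ∧
      IsRegularPDA P (Finset.range (n * (n - z - 1) / 2)) 2 := by
  classical
  obtain ⟨c, hc⟩ := hn
  have h2 : 2 * (n / 2) = n := by omega
  have h4 : 4 ≤ n := by omega
  set N := n * (n - z - 1) / 2 with hN
  set E : Finset (Fin n × Fin n) :=
    univ.filter (fun p => p.1 < p.2 ∧ z ≤ Stmt4.rnd n (p.1 : ℕ) (p.2 : ℕ)) with hE
  have hmemE : ∀ p : Fin n × Fin n,
      p ∈ E ↔ p.1 < p.2 ∧ z ≤ Stmt4.rnd n (p.1 : ℕ) (p.2 : ℕ) := by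
    intro p; simp [hE]
  set D : Finset (Fin n × Fin n) :=
    univ.filter (fun p => p.1 ≠ p.2 ∧ z ≤ Stmt4.rnd n (p.1 : ℕ) (p.2 : ℕ)) with hDdef
  have hmemD : ∀ p : Fin n × Fin n,
      p ∈ D ↔ p.1 ≠ p.2 ∧ z ≤ Stmt4.rnd n (p.1 : ℕ) (p.2 : ℕ) := by
    intro p; simp [hDdef]
  have hDcard : D.card = n * ((n - 1) - z) := by
    rw [Finset.card_eq_sum_card_fiberwise (f := Prod.snd) (t := (univ : Finset (Fin n)))
      (fun x _ => mem_univ _)]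
    have heach : ∀ k : Fin n,
        (D.filter (fun p => p.snd = k)).card = (n - 1) - z := by
      intro k
      rw [← Stmt4.col_count h2 h4 (z := z) (by omega) k]
      apply Finset.card_nbij' (i := fun p => p.1) (j := fun x => (x, k))
      · intro p hp
        rw [Finset.mem_coe, Finset.mem_filter, hmemD] at hp
        simp only [Finset.mem_coe, Finset.mem_filter, Finset.mem_univ, true_and]
        obtain ⟨⟨hne, hr⟩, hk⟩ := hp
        subst hk
        exact ⟨hne, hr⟩
      · intro x hx
        simp only [Finset.mem_coe, Finset.mem_filter, Finset.mem_univ, true_and] at hx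
        rw [Finset.mem_coe, Finset.mem_filter, hmemD]
        exact ⟨⟨hx.1, hx.2⟩, rfl⟩
      · intro p hp
        rw [Finset.mem_coe, Finset.mem_filter] at hp
        exact Prod.ext rfl hp.2.symm
      · intro x _
        rfl
    rw [Finset.sum_congr rfl (fun k _ => heach k)]
    simp [mul_comm]
  have hsplit := Finset.card_filter_add_card_filter_not
    (s := D) (p := fun p : Fin n × Fin n => p.1 < p.2)
  have hpos : D.filter (fun p : Fin n × Fin n => p.1 < p.2) = E := by
    ext p
    rw [Finset.mem_filter, hmemD, hmemE]
    constructor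
    · rintro ⟨⟨_, hr⟩, hlt⟩; exact ⟨hlt, hr⟩
    · rintro ⟨hlt, hr⟩; exact ⟨⟨ne_of_lt hlt, hr⟩, hlt⟩
  have hneg : (D.filter (fun p : Fin n × Fin n => ¬ p.1 < p.2)).card = E.card := by
    apply Finset.card_nbij' (i := fun p => (p.2, p.1)) (j := fun p => (p.2, p.1))
    · intro p hp
      rw [Finset.mem_coe, Finset.mem_filter, hmemD] at hp
      rw [Finset.mem_coe, hmemE]
      obtain ⟨⟨hne, hr⟩, hnlt⟩ := hp
      exact ⟨lt_of_le_of_ne (le_of_not_gt hnlt) (Ne.symm hne),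
        by rw [Stmt4.rnd_symm]; exact hr⟩
    · intro p hp
      rw [Finset.mem_coe, hmemE] at hp
      rw [Finset.mem_coe, Finset.mem_filter, hmemD]
      exact ⟨⟨(ne_of_lt hp.1).symm, by rw [Stmt4.rnd_symm]; exact hp.2⟩, not_lt.mpr hp.1.le⟩
    · intro p _; rfl
    · intro p _; rfl
  have hcardE : E.card = N := by
    rw [hpos, hneg] at hsplit
    have hnz : n * (n - z - 1) = n * ((n - 1) - z) := by congr 1; omega
    omega
  set P : Fin n → Fin n → Option ℕ := fun j k =>
    if h : (min j k, max j k) ∈ E then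
      some ((E.equivFin ⟨(min j k, max j k), h⟩ : Fin E.card) : ℕ)
    else none with hPdef
  have hminmax : ∀ j k : Fin n,
      Stmt4.rnd n ((min j k : Fin n) : ℕ) ((max j k : Fin n) : ℕ) = Stmt4.rnd n j k := by
    intro j k
    rcases le_total j k with h | h
    · rw [min_eq_left h, max_eq_right h]
    · rw [min_eq_right h, max_eq_left h, Stmt4.rnd_symm]
  have hmem : ∀ j k : Fin n,
      ((min j k, max j k) ∈ E) ↔ (j ≠ k ∧ z ≤ Stmt4.rnd n (j : ℕ) (k : ℕ)) := by
    intro j k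
    rw [hmemE]
    dsimp only
    rw [hminmax]
    constructor
    · rintro ⟨hlt, hr⟩
      refine ⟨fun heq => ?_, hr⟩
      rw [heq] at hlt
      simp at hlt
    · rintro ⟨hne, hr⟩
      refine ⟨?_, hr⟩
      rcases le_total j k with h | h
      · rw [min_eq_left h, max_eq_right h]; exact lt_of_le_of_ne h hne
      · rw [min_eq_right h, max_eq_left h]; exact lt_of_le_of_ne h (Ne.symm hne)
  have hPnone : ∀ j k : Fin n,
      P j k = none ↔ ¬(j ≠ k ∧ z ≤ Stmt4.rnd n (j : ℕ) (k : ℕ)) := by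
    intro j k
    rw [hPdef]
    dsimp only
    by_cases h : (min j k, max j k) ∈ E
    · rw [dif_pos h]
      exact ⟨fun habs => absurd habs (Option.some_ne_none _), fun habs => absurd ((hmem j k).mp h) habs⟩
    · rw [dif_neg h]
      exact ⟨fun _ hcon => h ((hmem j k).mpr hcon), fun _ => rfl⟩
  have hPsome : ∀ (j k : Fin n) (s : ℕ), P j k = some s →
      ∃ hp : (min j k, max j k) ∈ E,
        ((E.equivFin ⟨(min j k, max j k), hp⟩ : Fin E.card) : ℕ) = s := by
    intro j k s hjk
    rw [hPdef] at hjk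
    dsimp only at hjk
    by_cases h : (min j k, max j k) ∈ E
    · rw [dif_pos h] at hjk
      exact ⟨h, Option.some.inj hjk⟩
    · rw [dif_neg h] at hjk
      exact absurd hjk (by simp)
  have hPofE : ∀ (p : Fin n × Fin n) (hp : p ∈ E),
      P p.1 p.2 = some ((E.equivFin ⟨p, hp⟩ : Fin E.card) : ℕ) := by
    intro p hp
    have h1 : p.1 < p.2 := ((hmemE p).mp hp).1
    have hpair : (min p.1 p.2, max p.1 p.2) = p := by
      rw [min_eq_left h1.le, max_eq_right h1.le]
    rw [hPdef]
    dsimp only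
    rw [dif_pos (by rw [hpair]; exact hp)]
    exact congrArg (fun q : {q // q ∈ E} => some ((E.equivFin q : Fin E.card) : ℕ))
      (Subtype.ext hpair)
  refine ⟨P, ⟨?_, ?_, ?_, ?_⟩, ?_⟩
  · -- column stars
    intro k
    unfold colStars
    have hfe : (univ.filter fun j => P j k = none)
        = univ.filter (fun j : Fin n => ¬(j ≠ k ∧ z ≤ Stmt4.rnd n (j : ℕ) (k : ℕ))) :=
      Finset.filter_congr (fun j _ => by rw [hPnone j k])
    rw [hfe]
    have hcc := Stmt4.col_count h2 h4 (z := z) (by omega) k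
    have htot := Finset.card_filter_add_card_filter_not
      (s := (univ : Finset (Fin n)))
      (p := fun j : Fin n => j ≠ k ∧ z ≤ Stmt4.rnd n (j : ℕ) (k : ℕ))
    rw [Finset.card_univ, Fintype.card_fin] at htot
    omega
  · -- every integer occurs
    intro s hs
    rw [Finset.mem_range] at hs
    have hs' : s < E.card := by omega
    set x := E.equivFin.symm ⟨s, hs'⟩ with hxdef
    have hxa : E.equivFin x = ⟨s, hs'⟩ := Equiv.apply_symm_apply _ _
    refine ⟨x.1.1, x.1.2, ?_⟩
    rw [hPofE x.1 x.2]
    exact congrArg (fun t : Fin E.card => some (t : ℕ)) hxa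
  · -- entries lie in S
    intro j k s hjk
    obtain ⟨hp, hv⟩ := hPsome j k s hjk
    rw [Finset.mem_range]
    have hlt := (E.equivFin ⟨(min j k, max j k), hp⟩).isLt
    omega
  · -- Blackburn property
    intro j₁ k₁ j₂ k₂ s hne hp1 hp2
    obtain ⟨h1, hv1⟩ := hPsome _ _ _ hp1
    obtain ⟨h2m, hv2⟩ := hPsome _ _ _ hp2
    have hfin : E.equivFin ⟨(min j₁ k₁, max j₁ k₁), h1⟩
        = E.equivFin ⟨(min j₂ k₂, max j₂ k₂), h2m⟩ := Fin.ext (by omega)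
    have hpair : (min j₁ k₁, max j₁ k₁) = (min j₂ k₂, max j₂ k₂) :=
      congrArg Subtype.val (E.equivFin.injective hfin)
    have hmin' : min j₁ k₁ = min j₂ k₂ := congrArg Prod.fst hpair
    have hmax' : max j₁ k₁ = max j₂ k₂ := congrArg Prod.snd hpair
    rcases Stmt4.pair_rec hmin' hmax' with ⟨e1, e2⟩ | ⟨e1, e2⟩
    · exact absurd (by rw [e1, e2]) hne
    · constructor
      · rw [← e1, hPnone]
        simp
      · rw [← e2, hPnone]
        simp
  · -- 2-regularity
    intro s hs
    rw [Finset.mem_range] at hs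
    have hs' : s < E.card := by omega
    set x := E.equivFin.symm ⟨s, hs'⟩ with hxdef
    have hablt : x.1.1 < x.1.2 := ((hmemE x.1).mp x.2).1
    have hxa : E.equivFin x = ⟨s, hs'⟩ := Equiv.apply_symm_apply _ _
    have hPab : P x.1.1 x.1.2 = some s := by
      rw [hPofE x.1 x.2]
      exact congrArg (fun t : Fin E.card => some (t : ℕ)) hxa
    have hPba : P x.1.2 x.1.1 = some s := by
      rw [hPdef]
      dsimp only
      have hpair : (min x.1.2 x.1.1, max x.1.2 x.1.1) = x.1 := by
        rw [min_eq_right hablt.le, max_eq_left hablt.le]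
      rw [dif_pos (by rw [hpair]; exact x.2)]
      calc some ((E.equivFin ⟨(min x.1.2 x.1.1, max x.1.2 x.1.1), _⟩ : Fin E.card) : ℕ)
          = some ((E.equivFin ⟨x.1, x.2⟩ : Fin E.card) : ℕ) :=
            congrArg (fun q : {q // q ∈ E} => some ((E.equivFin q : Fin E.card) : ℕ))
              (Subtype.ext hpair)
        _ = some s := congrArg (fun t : Fin E.card => some (t : ℕ)) hxa
    have hset : (univ : Finset (Fin n × Fin n)).filter (fun jk => P jk.1 jk.2 = some s)
        = {(x.1.1, x.1.2), (x.1.2, x.1.1)} := by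
      ext q
      simp only [Finset.mem_filter, Finset.mem_univ, true_and, Finset.mem_insert,
        Finset.mem_singleton]
      constructor
      · intro hq
        obtain ⟨hp, hv⟩ := hPsome q.1 q.2 s hq
        have hxeq : (⟨(min q.1 q.2, max q.1 q.2), hp⟩ : {p // p ∈ E}) = x := by
          apply E.equivFin.injective
          rw [hxa]
          exact Fin.ext hv
        have hpair2 : (min q.1 q.2, max q.1 q.2) = x.1 := congrArg Subtype.val hxeq
        have hminq : min q.1 q.2 = x.1.1 := congrArg Prod.fst hpair2
        have hmaxq : max q.1 q.2 = x.1.2 := congrArg Prod.snd hpair2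
        rcases le_total q.1 q.2 with h | h
        · left
          rw [min_eq_left h] at hminq
          rw [max_eq_right h] at hmaxq
          exact Prod.ext hminq hmaxq
        · right
          rw [min_eq_right h] at hminq
          rw [max_eq_left h] at hmaxq
          exact Prod.ext hmaxq hminq
      · rintro (rfl | rfl)
        · exact hPab
        · exact hPba
    rw [hset, Finset.card_pair]
    exact fun h => absurd (congrArg Prod.fst h) (ne_of_lt hablt)
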